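/- arXiv:1103.0286 — 2 statements merged into one kernel-verified Lean document; each statement's English description precedes it below -/
import Mathlib

section
/- Let d ≥ 2. Define, for each n = (n_2,…,n_d) ∈ {0,1,2,3}^{d-1} with n_1 := 0, the vector |ψ(n)⟩ = Σ_{j=1}^d i^{n_j}|j⟩ ∈ ℂ^d and the diagonal unitary σ_z(n) = Σ_{j=1}^d (-1)^{n_j}|j⟩⟨j|. Then the operators E_j = (1/√(d+1))|j⟩⟨j| for j = 1,…,d together with E_n = (1/√(4^{d-1}(d+1)))|ψ(n)⟩⟨ψ(n)|σ_z(n) satisfy the completeness relation Σ_j E_j†E_j + Σ_n E_n†E_n = I on ℂ^d. -/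
open Complex Matrix

/-- `|ψ(n)⟩⟨ψ(n)|` where `|ψ(n)⟩ = Σ_j i^{n_j}|j⟩`. -/
noncomputable def psiProj (d : ℕ) (n : Fin d → Fin 4) : Matrix (Fin d) (Fin d) ℂ :=
  Matrix.of fun p q => Complex.I ^ (n p : ℕ) * (-Complex.I) ^ (n q : ℕ)

/-- `σ_z(n) = Σ_j (-1)^{n_j}|j⟩⟨j|`. -/
noncomputable def sigmaZ (d : ℕ) (n : Fin d → Fin 4) : Matrix (Fin d) (Fin d) ℂ :=
  Matrix.diagonal fun j => (-1 : ℂ) ^ (n j : ℕ)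

/-- The rank-one Kraus operator `E_n = (1/√(4^{d-1}(d+1)))|ψ(n)⟩⟨ψ(n)|σ_z(n)`. -/
noncomputable def krausPsi (d : ℕ) (n : Fin d → Fin 4) : Matrix (Fin d) (Fin d) ℂ :=
  ((1 : ℂ) / (Real.sqrt (4 ^ (d - 1) * (d + 1)) : ℝ)) • (psiProj d n * sigmaZ d n)

/-- The rank-one Kraus operator `E_j = (1/√(d+1))|j⟩⟨j|`. -/
noncomputable def krausDiag (d : ℕ) (j : Fin d) : Matrix (Fin d) (Fin d) ℂ :=
  ((1 : ℂ) / (Real.sqrt (d + 1) : ℝ)) • Matrix.single j j (1 : ℂ)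

private lemma pow_helper1 (a : ℕ) : (-Complex.I)^a * Complex.I^a = 1 := by
  rw [← mul_pow]; simp

private lemma pow_helper2 (a : ℕ) : ((-1:ℂ))^a * Complex.I^a = (-Complex.I)^a := by
  rw [← mul_pow]; ring_nf

private lemma pow_helper3 (a : ℕ) : ((-1:ℂ))^a * (-Complex.I)^a = Complex.I^a := by
  rw [← mul_pow]; ring_nf

private lemma Ipow_succ (a : Fin 4) :
    (Complex.I)^(((a+1):Fin 4):ℕ) = Complex.I * Complex.I^(a:ℕ) := by
  fin_cases a <;>
    simp [show ((3:Fin 4):ℕ) = 3 from rfl, show ((0:Fin 4):ℕ) = 0 from rfl,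
      show ((1:Fin 4):ℕ) = 1 from rfl, show ((2:Fin 4):ℕ) = 2 from rfl,
      pow_succ, Complex.I_sq]

private lemma negIpow_succ (a : Fin 4) :
    (-Complex.I)^(((a+1):Fin 4):ℕ) = -Complex.I * (-Complex.I)^(a:ℕ) := by
  fin_cases a <;>
    simp [show ((3:Fin 4):ℕ) = 3 from rfl, show ((0:Fin 4):ℕ) = 0 from rfl,
      show ((1:Fin 4):ℕ) = 1 from rfl, show ((2:Fin 4):ℕ) = 2 from rfl,
      pow_succ, Complex.I_sq]

private lemma card_filter_eq (d : ℕ) (z : Fin d) :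
    ((Finset.univ.filter (fun n : Fin d → Fin 4 => n z = 0)).card) = 4 ^ (d - 1) := by
  have e : {n : Fin d → Fin 4 // n z = 0} ≃ ({j : Fin d // ¬ (j = z)} → Fin 4) :=
    { toFun := fun n j => n.1 j.1
      invFun := fun g => ⟨fun j => if h : j = z then 0 else g ⟨j, h⟩, by simp⟩
      left_inv := by
        rintro ⟨n, hn⟩
        ext j
        by_cases h : j = z <;> simp [h, hn]
      right_inv := by
        intro g; ext j; simp [j.2] }
  have h1 : ((Finset.univ.filter (fun n : Fin d → Fin 4 => n z = 0)).card)
      = Fintype.card {n : Fin d → Fin 4 // n z = 0} := (Fintype.card_subtype _).symm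
  rw [h1, Fintype.card_congr e, Fintype.card_fun]
  simp [Fintype.card_subtype_compl, Fintype.card_subtype_eq]

private lemma sum_shift (d : ℕ) (z k : Fin d) (hk : k ≠ z) (c : ℂ) (hc : c ≠ 1)
    (F : (Fin d → Fin 4) → ℂ)
    (hF : ∀ n, F (Function.update n k (n k + 1)) = c * F n) :
    ∑ n ∈ Finset.univ.filter (fun n : Fin d → Fin 4 => n z = 0), F n = 0 := by
  set s := Finset.univ.filter (fun n : Fin d → Fin 4 => n z = 0) with hs
  have key : ∑ n ∈ s, F n = c * ∑ n ∈ s, F n := by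
    rw [Finset.mul_sum]
    refine Finset.sum_nbij' (fun n => Function.update n k (n k - 1))
      (fun n => Function.update n k (n k + 1)) ?_ ?_ ?_ ?_ ?_
    · intro a ha
      simp only [hs, Finset.mem_filter, Finset.mem_univ, true_and] at ha ⊢
      rw [Function.update_of_ne (Ne.symm hk)]; exact ha
    · intro a ha
      simp only [hs, Finset.mem_filter, Finset.mem_univ, true_and] at ha ⊢
      rw [Function.update_of_ne (Ne.symm hk)]; exact ha
    · intro a _
      ext j
      by_cases h : j = k
      · subst h; simp
      · simp [Function.update_of_ne h]
    · intro a _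
      ext j
      by_cases h : j = k
      · subst h; simp
      · simp [Function.update_of_ne h]
    · intro a _
      have := hF (Function.update a k (a k - 1))
      rw [Function.update_idem, Function.update_self, sub_add_cancel,
        Function.update_eq_self] at this
      exact this
  have h2 : (c - 1) * ∑ n ∈ s, F n = 0 := by
    rw [sub_mul, one_mul]; exact sub_eq_zero.2 key.symm
  rcases mul_eq_zero.1 h2 with h | h
  · exact absurd (sub_eq_zero.1 h) hc
  · exact h

private lemma sum_offdiag (d : ℕ) (z p q : Fin d) (hpq : p ≠ q) :
    ∑ n ∈ Finset.univ.filter (fun n : Fin d → Fin 4 => n z = 0),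
      (-Complex.I)^((n p : ℕ)) * Complex.I^((n q : ℕ)) = 0 := by
  by_cases hp : p = z
  · have hq : q ≠ z := fun h => hpq (hp.trans h.symm)
    refine sum_shift d z q hq Complex.I (by intro h; simpa using congrArg Complex.im h) _ ?_
    intro n
    rw [Function.update_of_ne hpq, Function.update_self, Ipow_succ]
    ring
  · refine sum_shift d z p hp (-Complex.I) ?_ _ ?_
    · intro h; simpa using congrArg Complex.im h
    · intro n
      rw [Function.update_of_ne (Ne.symm hpq), Function.update_self, negIpow_succ]
      ring

private lemma sum_diag' (d : ℕ) (z p : Fin d) :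
    ∑ n ∈ Finset.univ.filter (fun n : Fin d → Fin 4 => n z = 0),
      (-Complex.I)^((n p : ℕ)) * Complex.I^((n p : ℕ)) = (4:ℂ) ^ (d-1) := by
  rw [Finset.sum_congr rfl (fun n _ => pow_helper1 _), Finset.sum_const, card_filter_eq]
  simp

private lemma std_conjT (d : ℕ) (j : Fin d) :
    (Matrix.single j j (1:ℂ))ᴴ = Matrix.single j j (1:ℂ) := by
  ext p q
  simp [Matrix.conjTranspose_apply, Matrix.single, apply_ite, and_comm]

private lemma sum_std (n : ℕ) : ∑ j : Fin n, Matrix.single j j (1:ℂ) = 1 := by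
  ext p q
  rw [Matrix.sum_apply]
  by_cases h : p = q
  · subst h
    simp [Matrix.single, Matrix.one_apply, and_self, Finset.sum_ite_eq]
  · rw [Finset.sum_eq_zero, Matrix.one_apply_ne h]
    intro x _
    simp [Matrix.single]
    rintro rfl; exact h

private lemma sumA (d : ℕ) :
    ∑ j : Fin d, (krausDiag d j)ᴴ * krausDiag d j
      = (((d:ℂ)+1)⁻¹) • (1 : Matrix (Fin d) (Fin d) ℂ) := by
  have hc : star ((1:ℂ)/((Real.sqrt (d + 1) : ℝ):ℂ)) * ((1:ℂ)/((Real.sqrt (d + 1) : ℝ):ℂ))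
      = ((d:ℂ)+1)⁻¹ := by
    rw [Complex.star_def, map_div₀, _root_.map_one, Complex.conj_ofReal, div_mul_div_comm,
      one_mul, ← Complex.ofReal_mul, Real.mul_self_sqrt (by positivity)]
    push_cast
    rw [one_div]
  have h1 : ∀ j : Fin d, (krausDiag d j)ᴴ * krausDiag d j
      = (((d:ℂ)+1)⁻¹) • Matrix.single j j (1:ℂ) := by
    intro j
    rw [krausDiag, Matrix.conjTranspose_smul, Matrix.smul_mul, Matrix.mul_smul, smul_smul, hc,
      std_conjT, Matrix.single_mul_single_same, one_mul]
  rw [Finset.sum_congr rfl (fun j _ => h1 j), ← Finset.smul_sum, sum_std]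

private lemma keyB (d : ℕ) (n : Fin d → Fin 4) :
    (krausPsi d n)ᴴ * krausPsi d n
      = ((((4:ℂ)^(d-1) * ((d:ℂ)+1))⁻¹) * d) •
        Matrix.of (fun p q => (-Complex.I)^((n p : ℕ)) * Complex.I^((n q : ℕ))) := by
  have hc : star ((1:ℂ)/((Real.sqrt (4 ^ (d-1) * (d + 1)) : ℝ):ℂ))
        * ((1:ℂ)/((Real.sqrt (4 ^ (d-1) * (d + 1)) : ℝ):ℂ))
      = ((4:ℂ)^(d-1) * ((d:ℂ)+1))⁻¹ := by
    rw [Complex.star_def, map_div₀, _root_.map_one, Complex.conj_ofReal, div_mul_div_comm,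
      one_mul, ← Complex.ofReal_mul, Real.mul_self_sqrt (by positivity)]
    push_cast
    rw [one_div]
  have hA : ∀ k p, (psiProj d n * sigmaZ d n) k p
      = Complex.I ^ (n k : ℕ) * (-Complex.I)^((n p : ℕ)) * (-1:ℂ)^((n p : ℕ)) := by
    intro k p
    rw [sigmaZ, Matrix.mul_diagonal]
    rfl
  have hm : (psiProj d n * sigmaZ d n)ᴴ * (psiProj d n * sigmaZ d n)
      = (d:ℂ) • Matrix.of (fun p q => (-Complex.I)^((n p : ℕ)) * Complex.I^((n q : ℕ))) := by
    ext p q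
    rw [Matrix.mul_apply]
    have hterm : ∀ k : Fin d,
        (psiProj d n * sigmaZ d n)ᴴ p k * (psiProj d n * sigmaZ d n) k q
        = (-Complex.I)^((n p : ℕ)) * Complex.I^((n q : ℕ)) := by
      intro k
      rw [Matrix.conjTranspose_apply, hA, hA]
      have hstar : star (Complex.I ^ (n k : ℕ) * (-Complex.I)^((n p : ℕ)) * (-1:ℂ)^((n p : ℕ)))
          = (-Complex.I)^((n k : ℕ)) * Complex.I^((n p : ℕ)) * (-1:ℂ)^((n p : ℕ)) := by
        simp [star_mul', star_pow, Complex.star_def, Complex.conj_I]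
      rw [hstar]
      trans ((-Complex.I)^((n k : ℕ)) * Complex.I^((n k : ℕ)))
        * (((-1:ℂ)^((n p : ℕ)) * Complex.I^((n p : ℕ)))
          * ((-1:ℂ)^((n q : ℕ)) * (-Complex.I)^((n q : ℕ))))
      · ring
      · rw [pow_helper1, pow_helper2, pow_helper3, one_mul]
    rw [Finset.sum_congr rfl (fun k _ => hterm k), Finset.sum_const, Finset.card_univ,
      Fintype.card_fin, nsmul_eq_mul]
    simp
  rw [krausPsi, Matrix.conjTranspose_smul, Matrix.smul_mul, Matrix.mul_smul, smul_smul, hc,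
    hm, smul_smul]

/-- Completeness relation for the Kraus operators of the complementary channel of the
`1 → 2` universal qudit cloner: `Σ_j E_j†E_j + Σ_n E_n†E_n = I`. -/
theorem kraus_completeness (d : ℕ) (hd : 2 ≤ d) :
    (∑ j : Fin d, (krausDiag d j)ᴴ * krausDiag d j)
      + ∑ n ∈ Finset.univ.filter (fun n : Fin d → Fin 4 => n ⟨0, by omega⟩ = 0),
          (krausPsi d n)ᴴ * krausPsi d n
      = (1 : Matrix (Fin d) (Fin d) ℂ) := by
  set z : Fin d := ⟨0, by omega⟩
  have sumC : ∑ n ∈ Finset.univ.filter (fun n : Fin d → Fin 4 => n z = 0),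
      Matrix.of (fun p q => (-Complex.I)^((n p : ℕ)) * Complex.I^((n q : ℕ)))
      = ((4:ℂ)^(d-1)) • (1 : Matrix (Fin d) (Fin d) ℂ) := by
    ext p q
    rw [Matrix.sum_apply]
    by_cases h : p = q
    · subst h
      simp only [Matrix.of_apply, Matrix.smul_apply, Matrix.one_apply_eq, smul_eq_mul, mul_one]
      exact sum_diag' d z p
    · simp only [Matrix.of_apply, Matrix.smul_apply, Matrix.one_apply_ne h, smul_eq_mul,
        mul_zero]
      exact sum_offdiag d z p q h
  rw [sumA, Finset.sum_congr rfl (fun n _ => keyB d n), ← Finset.smul_sum, sumC, smul_smul,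
    ← add_smul]
  have h4 : ((4:ℂ))^(d-1) ≠ 0 := pow_ne_zero _ (by norm_num)
  have hd1 : ((d:ℂ)+1) ≠ 0 := by
    have : ((d+1:ℕ):ℂ) ≠ 0 := Nat.cast_ne_zero.2 d.succ_ne_zero
    push_cast at this
    exact this
  have : ((d:ℂ)+1)⁻¹ + ((4:ℂ)^(d-1) * ((d:ℂ)+1))⁻¹ * (d:ℂ) * ((4:ℂ))^(d-1) = 1 := by
    field_simp
    ring
  rw [this, one_smul]
end

section
/- Let d ≥ 2 and let A_1,…,A_m be rank-one operators on ℂ^d with Σ A_i† A_i = I, defining the channel N(ρ) = Σ A_i ρ A_i†. Then N is entanglement-breaking: for the maximally entangled state |Φ⟩ = (1/√d)Σ_i |i⟩|i⟩, the state (id ⊗ N)(|Φ⟩⟨Φ|) is separable, i.e., a convex combination of product states. -/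
open Matrix
open scoped ComplexOrder Kronecker

noncomputable section

/-- outer product matrix |v⟩⟨v| -/
private def outerM {d : ℕ} (v : Fin d → ℂ) : Matrix (Fin d) (Fin d) ℂ :=
  Matrix.of fun a c => v a * (starRingEnd ℂ) (v c)

private lemma outerM_posSemidef {d : ℕ} (v : Fin d → ℂ) : (outerM v).PosSemidef := by
  rw [Matrix.posSemidef_iff_dotProduct_mulVec]
  constructor
  · ext a c
    simp [outerM, Matrix.conjTranspose_apply, mul_comm]
  · intro x
    have h1 : (star x) ⬝ᵥ (outerM v *ᵥ x)
        = (starRingEnd ℂ) (∑ c, (starRingEnd ℂ) (v c) * x c)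
          * (∑ c, (starRingEnd ℂ) (v c) * x c) := by
      simp only [dotProduct, mulVec, outerM, Matrix.of_apply, Pi.star_apply, RCLike.star_def,
        map_sum, _root_.map_mul, Complex.conj_conj, Finset.sum_mul, Finset.mul_sum]
      rw [Finset.sum_comm]
      apply Finset.sum_congr rfl; intro c _
      apply Finset.sum_congr rfl; intro a _
      ring
    rw [h1, mul_comm, Complex.mul_conj]
    exact_mod_cast Complex.normSq_nonneg _

private lemma outerM_trace {d : ℕ} (v : Fin d → ℂ) :
    (outerM v).trace = ((∑ a, Complex.normSq (v a) : ℝ) : ℂ) := by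
  simp only [Matrix.trace, Matrix.diag, outerM, Matrix.of_apply, Complex.mul_conj]
  push_cast
  rfl

private lemma smul_psd {d : ℕ} (r : ℝ) (hr : 0 ≤ r) {M : Matrix (Fin d) (Fin d) ℂ}
    (hM : M.PosSemidef) : ((r : ℂ) • M).PosSemidef := by
  rw [Matrix.posSemidef_iff_dotProduct_mulVec]
  constructor
  · show ((r : ℂ) • M)ᴴ = (r : ℂ) • M
    rw [Matrix.conjTranspose_smul, hM.1.eq, Complex.star_def, Complex.conj_ofReal]
  · intro x
    rw [Matrix.smul_mulVec, dotProduct_smul, smul_eq_mul]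
    exact mul_nonneg (by exact_mod_cast hr) (hM.dotProduct_mulVec_nonneg x)

private lemma vec_eq_zero {d : ℕ} {v : Fin d → ℂ}
    (h : ∑ a, Complex.normSq (v a) = 0) : ∀ a, v a = 0 := by
  intro a
  have := (Finset.sum_eq_zero_iff_of_nonneg (fun i _ => Complex.normSq_nonneg (v i))).mp h
    a (Finset.mem_univ a)
  exact Complex.normSq_eq_zero.mp this

end

/-- A channel with rank-one Kraus operators is entanglement-breaking: the Choi state
`(id ⊗ N)(|Φ⟩⟨Φ|)`, with entries `((a,b),(c,e)) ↦ (1/d)Σ_i (A_i)_{b,a}·conj((A_i)_{e,c})`,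
is a convex combination of product states. -/
theorem rank_one_kraus_entanglement_breaking (d m : ℕ) (hd : 2 ≤ d)
    (A : Fin m → Matrix (Fin d) (Fin d) ℂ)
    (hrank : ∀ i, ∃ u v : Fin d → ℂ, A i = Matrix.of fun a b => u a * v b)
    (hcomp : ∑ i, (A i)ᴴ * A i = 1) :
    ∃ (T : ℕ) (w : Fin T → ℝ) (σ τ : Fin T → Matrix (Fin d) (Fin d) ℂ),
      (∀ t, 0 ≤ w t) ∧ (∑ t, w t = 1)
      ∧ (∀ t, (σ t).PosSemidef ∧ (σ t).trace = 1)
      ∧ (∀ t, (τ t).PosSemidef ∧ (τ t).trace = 1)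
      ∧ (Matrix.of fun x y : Fin d × Fin d =>
            (1 / (d : ℂ)) * ∑ i, (A i) x.2 x.1 * (starRingEnd ℂ) ((A i) y.2 y.1))
          = ∑ t, (w t : ℂ) • (σ t ⊗ₖ τ t) := by
  classical
  have hd0 : (0:ℝ) < d := by positivity
  -- extract the rank-one vectors
  set u : Fin m → Fin d → ℂ := fun i => (hrank i).choose with hu
  set v : Fin m → Fin d → ℂ := fun i => (hrank i).choose_spec.choose with hv
  have hA : ∀ i, A i = Matrix.of fun a b => u i a * v i b := fun i =>
    (hrank i).choose_spec.choose_spec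
  set nu : Fin m → ℝ := fun i => ∑ a, Complex.normSq (u i a) with hnu
  set nv : Fin m → ℝ := fun i => ∑ a, Complex.normSq (v i a) with hnv
  have hnu0 : ∀ i, 0 ≤ nu i := fun i => Finset.sum_nonneg fun a _ => Complex.normSq_nonneg _
  have hnv0 : ∀ i, 0 ≤ nv i := fun i => Finset.sum_nonneg fun a _ => Complex.normSq_nonneg _
  -- the trace identity: ∑ i, nu i * nv i = d
  have htr : ∑ i, nu i * nv i = d := by
    have h1 : (∑ i, (A i)ᴴ * A i).trace = (1 : Matrix (Fin d) (Fin d) ℂ).trace := by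
      rw [hcomp]
    rw [Matrix.trace_sum, Matrix.trace_one] at h1
    simp only [Fintype.card_fin] at h1
    have h2 : ∀ i, ((A i)ᴴ * A i).trace = ((nu i * nv i : ℝ) : ℂ) := by
      intro i
      rw [hA i]
      simp only [Matrix.trace, Matrix.diag, Matrix.mul_apply, Matrix.conjTranspose_apply,
        Matrix.of_apply]
      have hterm : ∀ b a : Fin d, star (u i a * v i b) * (u i a * v i b)
          = ((Complex.normSq (u i a) * Complex.normSq (v i b) : ℝ) : ℂ) := by
        intro b a
        rw [RCLike.star_def, mul_comm, Complex.mul_conj, Complex.normSq_mul]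
      calc ∑ b, ∑ a, star (u i a * v i b) * (u i a * v i b)
          = ∑ b, ∑ a, ((Complex.normSq (u i a) * Complex.normSq (v i b) : ℝ) : ℂ) :=
            Finset.sum_congr rfl fun b _ => Finset.sum_congr rfl fun a _ => hterm b a
        _ = ((nu i * nv i : ℝ) : ℂ) := by
            have hr : nu i * nv i
                = ∑ b : Fin d, ∑ a : Fin d, Complex.normSq (u i a) * Complex.normSq (v i b) := by
              rw [Finset.sum_comm]
              have he : nu i * nv i
                  = (∑ a, Complex.normSq (u i a)) * (∑ b, Complex.normSq (v i b)) := rfl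
              rw [he, Finset.sum_mul_sum]
            rw [hr]
            push_cast
            rfl
    rw [Finset.sum_congr rfl fun i _ => h2 i] at h1
    have h3 : ((∑ i, nu i * nv i : ℝ) : ℂ) = ((d : ℝ) : ℂ) := by push_cast at h1 ⊢; exact h1
    exact_mod_cast h3
  -- the default state for degenerate terms
  have hpos : 0 < d := by omega
  set e0 : Fin d → ℂ := fun a => if a = ⟨0, hpos⟩ then 1 else 0 with he0
  have he0n : ∑ a, Complex.normSq (e0 a) = 1 := by
    have h : ∀ x : Fin d, Complex.normSq (e0 x) = if x = ⟨0, hpos⟩ then 1 else 0 := by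
      intro x; rw [he0]; dsimp only; split <;> simp
    rw [Finset.sum_congr rfl fun x _ => h x, Finset.sum_ite_eq' Finset.univ]
    simp
  refine ⟨m, fun i => nu i * nv i / d,
    fun i => if h : nv i = 0 then outerM e0 else ((nv i)⁻¹ : ℂ) • outerM (v i),
    fun i => if h : nu i = 0 then outerM e0 else ((nu i)⁻¹ : ℂ) • outerM (u i),
    ?_, ?_, ?_, ?_, ?_⟩
  · intro i; exact div_nonneg (mul_nonneg (hnu0 i) (hnv0 i)) hd0.le
  · rw [← Finset.sum_div, htr, div_self hd0.ne']
  · intro i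
    by_cases h : nv i = 0
    · simp only [dif_pos h]
      exact ⟨outerM_posSemidef e0, by rw [outerM_trace, he0n]; norm_num⟩
    · simp only [dif_neg h]
      refine ⟨?_, ?_⟩
      · rw [show (((nv i : ℝ) : ℂ))⁻¹ = (((nv i)⁻¹ : ℝ) : ℂ) from (Complex.ofReal_inv _).symm]
        exact smul_psd _ (inv_nonneg.mpr (hnv0 i)) (outerM_posSemidef (v i))
      · have hv' : (∑ a, Complex.normSq (v i a)) = nv i := rfl
        rw [Matrix.trace_smul, outerM_trace, hv', smul_eq_mul,
          inv_mul_cancel₀ (by exact_mod_cast h : ((nv i : ℝ) : ℂ) ≠ 0)]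
  · intro i
    by_cases h : nu i = 0
    · simp only [dif_pos h]
      exact ⟨outerM_posSemidef e0, by rw [outerM_trace, he0n]; norm_num⟩
    · simp only [dif_neg h]
      refine ⟨?_, ?_⟩
      · rw [show (((nu i : ℝ) : ℂ))⁻¹ = (((nu i)⁻¹ : ℝ) : ℂ) from (Complex.ofReal_inv _).symm]
        exact smul_psd _ (inv_nonneg.mpr (hnu0 i)) (outerM_posSemidef (u i))
      · have hu' : (∑ a, Complex.normSq (u i a)) = nu i := rfl
        rw [Matrix.trace_smul, outerM_trace, hu', smul_eq_mul,
          inv_mul_cancel₀ (by exact_mod_cast h : ((nu i : ℝ) : ℂ) ≠ 0)]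
  · ext x y
    simp only [Matrix.of_apply, Matrix.sum_apply, Matrix.smul_apply, Matrix.kroneckerMap_apply,
      smul_eq_mul]
    rw [Finset.mul_sum]
    apply Finset.sum_congr rfl
    intro i _
    rw [hA i]
    simp only [Matrix.of_apply, _root_.map_mul]
    by_cases hvz : nv i = 0
    · have hz : v i x.1 = 0 := vec_eq_zero hvz x.1
      simp [hvz, hz]
    by_cases huz : nu i = 0
    · have hz : u i x.2 = 0 := vec_eq_zero huz x.2
      simp [huz, hz]
    simp only [dif_neg hvz, dif_neg huz, Matrix.smul_apply, outerM, Matrix.of_apply,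
      smul_eq_mul]
    have h1 : ((nv i : ℝ) : ℂ) ≠ 0 := by exact_mod_cast hvz
    have h2 : ((nu i : ℝ) : ℂ) ≠ 0 := by exact_mod_cast huz
    have h3 : (d : ℂ) ≠ 0 := by exact_mod_cast hd0.ne'
    push_cast
    field_simp
end
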